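/- A graph matroid family M is unbounded if and only if every forest is M-independent. -/

import Mathlib

/-!
Common framework: graph matroid families.

A finite simple graph (without isolated vertices) is identified with its edge
set: a finite set of non-diagonal elements of `Sym2 ℕ`.  A graph matroid
family is encoded, following the paper, as a finitary matroid on the edge set
of the countable complete graph on `ℕ` that is invariant under all
permutations of `ℕ`.
-/

/-- The set of vertices covered by a set of edges. -/
def eSupp (E : Set (Sym2 ℕ)) : Set ℕ := {v : ℕ | ∃ e ∈ E, v ∈ e}

/-- The edge set of the complete graph on the vertex set `V`. -/
def clique (V : Set ℕ) : Set (Sym2 ℕ) := {e : Sym2 ℕ | ¬ e.IsDiag ∧ ∀ v ∈ e, v ∈ V}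

/-- The edge set of the complete graph `K_n` on the vertices `0, …, n-1`. -/
def cliqueN (n : ℕ) : Set (Sym2 ℕ) := clique {v : ℕ | v < n}

/-- `E` is (the edge set of) a finite simple graph. -/
def IsGraph (E : Set (Sym2 ℕ)) : Prop := E.Finite ∧ ∀ e ∈ E, ¬ e.IsDiag

/-- The degree of the vertex `v` in the edge set `E`. -/
noncomputable def deg (E : Set (Sym2 ℕ)) (v : ℕ) : ℕ := {e ∈ E | v ∈ e}.ncard

/-- The minimum degree of (the graph with) edge set `E` (whose vertex set is `eSupp E`). -/
noncomputable def minDeg (E : Set (Sym2 ℕ)) : ℕ := sInf {k : ℕ | ∃ v ∈ eSupp E, deg E v = k}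

/-- Deleting a set `S` of vertices from the graph with edge set `E`. -/
def deleteVerts (E : Set (Sym2 ℕ)) (S : Set ℕ) : Set (Sym2 ℕ) := {e ∈ E | ∀ v ∈ e, v ∉ S}

/-- The graph with edge set `E` is `k`-connected: it has more than `k` vertices and
deleting any set of fewer than `k` vertices leaves a connected graph. -/
def KConnected (k : ℕ) (E : Set (Sym2 ℕ)) : Prop :=
  k < (eSupp E).ncard ∧
  ∀ S : Finset ℕ, S.card < k →
    ((SimpleGraph.fromEdgeSet E).induce (eSupp E \ ↑S)).Connected

/-- `E` is a forest. -/
def IsForest (E : Set (Sym2 ℕ)) : Prop := (SimpleGraph.fromEdgeSet E).IsAcyclic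

/-- `E` is a matching: no two distinct edges of `E` share a vertex. -/
def IsMatching (E : Set (Sym2 ℕ)) : Prop :=
  ∀ e ∈ E, ∀ f ∈ E, e ≠ f → ∀ v : ℕ, v ∈ e → v ∉ f

/-- `E` is a star `K_{1,m}` with `m` edges. -/
def IsStar (m : ℕ) (E : Set (Sym2 ℕ)) : Prop :=
  ∃ (c : ℕ) (L : Finset ℕ), c ∉ L ∧ L.card = m ∧ E = (fun x => s(c, x)) '' ↑L

/-- `C` is a cycle graph `C_n` for some `n ≥ 3`. -/
def IsCycleGraph (C : Set (Sym2 ℕ)) : Prop :=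
  ∃ n : ℕ, 3 ≤ n ∧ ∃ f : ZMod n → ℕ, Function.Injective f ∧
    C = {e : Sym2 ℕ | ∃ i : ZMod n, e = s(f i, f (i + 1))}

/-- The rank of the set `X` in the matroid `M₀`: the supremum of the cardinalities of
independent subsets of `X` (as a natural number; all sets we use are finite). -/
noncomputable def mrk (M₀ : Matroid (Sym2 ℕ)) (X : Set (Sym2 ℕ)) : ℕ :=
  sSup {n : ℕ | ∃ I ⊆ X, M₀.Indep I ∧ I.ncard = n}

/-- A vertical `k`-separation of the matroid `M₀`. -/
def VerticalSep (M₀ : Matroid (Sym2 ℕ)) (k : ℕ) (E₁ E₂ : Set (Sym2 ℕ)) : Prop :=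
  Disjoint E₁ E₂ ∧ E₁ ∪ E₂ = M₀.E ∧
  k ≤ mrk M₀ E₁ ∧ k ≤ mrk M₀ E₂ ∧
  mrk M₀ E₁ + mrk M₀ E₂ + 1 ≤ mrk M₀ M₀.E + k

/-- The matroid `M₀` is vertically `k`-connected. -/
def VerticallyConnected (M₀ : Matroid (Sym2 ℕ)) (k : ℕ) : Prop :=
  k ≤ mrk M₀ M₀.E ∧
  ∀ k' : ℕ, 0 < k' → k' < k → ∀ E₁ E₂ : Set (Sym2 ℕ), ¬ VerticalSep M₀ k' E₁ E₂

/-- A `d`-dimensional abstract rigidity matroid on the complete graph with vertex set `V`. -/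
def IsARM (d : ℕ) (V : Set ℕ) (M₀ : Matroid (Sym2 ℕ)) : Prop :=
  M₀.E = clique V ∧
  (∀ E₁ E₂ : Set (Sym2 ℕ), E₁ ⊆ clique V → E₂ ⊆ clique V →
      (eSupp E₁ ∩ eSupp E₂).ncard < d →
      M₀.closure (E₁ ∪ E₂) = M₀.closure E₁ ∪ M₀.closure E₂) ∧
  (∀ E₁ E₂ : Set (Sym2 ℕ), E₁ ⊆ clique V → E₂ ⊆ clique V →
      d ≤ (eSupp E₁ ∩ eSupp E₂).ncard →
      M₀.closure E₁ = clique (eSupp E₁) → M₀.closure E₂ = clique (eSupp E₂) →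
      M₀.closure (E₁ ∪ E₂) = clique (eSupp E₁ ∪ eSupp E₂))

/-- The `d`-dimensional edge split operation: replace an edge `uv` of `G` by a new
vertex `w` joined to `u` and `v`, as well as to `d - 1` other vertices of `G`. -/
def EdgeSplit (d : ℕ) (G G' : Set (Sym2 ℕ)) : Prop :=
  ∃ (u v w : ℕ) (X : Finset ℕ),
    s(u, v) ∈ G ∧ w ∉ eSupp G ∧ ↑X ⊆ eSupp G ∧ X.card = d - 1 ∧ u ∉ X ∧ v ∉ X ∧
    G' = (G \ {s(u, v)}) ∪ {s(w, u), s(w, v)} ∪ ((fun x => s(w, x)) '' ↑X)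

/-- A graph matroid family: a finitary matroid on the edge set of the countable
complete graph on `ℕ`, invariant under all permutations of `ℕ`. -/
structure GraphMatroidFamily where
  /-- The underlying matroid on the edge set of `K_ℕ`. -/
  M : Matroid (Sym2 ℕ)
  ground_eq : M.E = {e : Sym2 ℕ | ¬ e.IsDiag}
  finitary : M.Finitary
  invariant : ∀ σ : Equiv.Perm ℕ, ∀ I : Set (Sym2 ℕ),
    M.Indep I → M.Indep (Sym2.map σ '' I)

namespace GraphMatroidFamily

variable (M : GraphMatroidFamily)

/-- The rank function of the family: `M.rk E` is the rank of the matroid `M(G)` for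
any graph `G` whose edge set contains `E`. -/
noncomputable def rk (E : Set (Sym2 ℕ)) : ℕ := mrk M.M E

/-- A set of edges (a graph) is `M`-independent. -/
def Indep (E : Set (Sym2 ℕ)) : Prop := M.M.Indep E

/-- `C` is an `M`-circuit: a graph that is not `M`-independent, but such that deleting
any single edge from it yields an `M`-independent graph. -/
def IsCircuit (C : Set (Sym2 ℕ)) : Prop :=
  IsGraph C ∧ ¬ M.Indep C ∧ ∀ e ∈ C, M.Indep (C \ {e})

/-- The graph with edge set `E` is `M`-rigid. -/
def Rigid (E : Set (Sym2 ℕ)) : Prop := M.rk E = M.rk (clique (eSupp E))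

/-- The graph with vertex set `V` and edge set `E` is `M`-rigid. -/
def RigidOn (V : Set ℕ) (E : Set (Sym2 ℕ)) : Prop := M.rk E = M.rk (clique V)

/-- `M` is trivial if every (finite, simple) graph is `M`-independent. -/
def Trivial : Prop := ∀ E : Set (Sym2 ℕ), IsGraph E → M.Indep E

/-- `M` is unbounded: the sequence `r(K_n)` is unbounded. -/
def Unbounded : Prop := ∀ B : ℕ, ∃ n : ℕ, B < M.rk (cliqueN n)

/-- `M` is bounded: the sequence `r(K_n)` is bounded. -/
def Bounded : Prop := ∃ B : ℕ, ∀ n : ℕ, M.rk (cliqueN n) ≤ B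

/-- For a bounded family, `m` is the rank `r(M)` of `M`: the maximum (limit) of the
monotone sequence `r(K_n)`. -/
def HasRank (m : ℕ) : Prop :=
  (∀ n : ℕ, M.rk (cliqueN n) ≤ m) ∧ ∃ n : ℕ, M.rk (cliqueN n) = m

/-- `d` is the dimensionality of (the nontrivial family) `M`: the least `d` such that
there is an `M`-circuit with minimum degree `d + 1`. -/
def IsDimensionality (d : ℕ) : Prop :=
  IsLeast {d : ℕ | ∃ C, M.IsCircuit C ∧ minDeg C = d + 1} d

/-- `t` is the threshold of (the nontrivial family) `M` with dimensionality `d`: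
the least value of `|V(C)| - 1` over all `M`-circuits `C` with minimum degree `d + 1`. -/
def IsThreshold (d t : ℕ) : Prop :=
  IsLeast {t : ℕ | ∃ C, M.IsCircuit C ∧ minDeg C = d + 1 ∧ (eSupp C).ncard = t + 1} t

/-- `M` has the Lovász–Yemini property. -/
def LovaszYemini : Prop :=
  ∃ c : ℕ, ∀ E : Set (Sym2 ℕ), IsGraph E → KConnected c E → M.Rigid E

/-- `ψ` is an isomorphism between the matroids `M(G)` and `M(H)`. -/
def MatroidIso (G H : Set (Sym2 ℕ)) (ψ : Sym2 ℕ → Sym2 ℕ) : Prop :=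
  Set.BijOn ψ G H ∧ ∀ S ⊆ G, (M.Indep S ↔ M.Indep (ψ '' S))

/-- `G` is `M`-reconstructible: every isomorphism between `M(G)` and `M(H)` (for a graph
`H` without isolated vertices) is induced by a graph isomorphism. -/
def Reconstructible (G : Set (Sym2 ℕ)) : Prop :=
  ∀ H : Set (Sym2 ℕ), IsGraph H → ∀ ψ : Sym2 ℕ → Sym2 ℕ, M.MatroidIso G H ψ →
    ∃ φ : ℕ → ℕ, Set.BijOn φ (eSupp G) (eSupp H) ∧ ∀ e ∈ G, ψ e = Sym2.map φ e

/-- `M` has the Whitney property. -/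
def Whitney : Prop :=
  ∃ c : ℕ, ∀ E : Set (Sym2 ℕ), IsGraph E → KConnected c E → M.Reconstructible E

/-- `M` is the union of the graph matroid families `Ms`. -/
def IsUnionOf {k : ℕ} (Ms : Fin k → GraphMatroidFamily) : Prop :=
  ∀ I : Set (Sym2 ℕ),
    M.Indep I ↔ ∃ Is : Fin k → Set (Sym2 ℕ), (∀ i, (Ms i).Indep (Is i)) ∧ I = ⋃ i, Is i

/-- `M` is a family of `d`-dimensional abstract rigidity matroids. -/
def FamilyOfARM (d : ℕ) : Prop :=
  ∀ n : ℕ, d ≤ n → IsARM d {v : ℕ | v < n} (M.M.restrict (cliqueN n))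

/-- `M` is `1`-extendable: its dimensionality `d` is finite and positive, and the
`d`-dimensional edge split operation preserves `M`-independence. -/
def OneExtendable : Prop :=
  ∃ d : ℕ, 0 < d ∧ M.IsDimensionality d ∧
    ∀ G G' : Set (Sym2 ℕ), IsGraph G → M.Indep G → EdgeSplit d G G' → M.Indep G'

/-- `G` is `k`-vertex-redundantly `M`-rigid. -/
def VertexRedundantlyRigid (k : ℕ) (G : Set (Sym2 ℕ)) : Prop :=
  M.Rigid G ∧ ∀ S : Finset ℕ, ↑S ⊆ eSupp G → S.card ≤ k →
    M.RigidOn (eSupp G \ ↑S) (deleteVerts G ↑S)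

end GraphMatroidFamily

open Set

/-! ### Auxiliary lemmas -/

lemma aux_sym2_mem_finite (e : Sym2 ℕ) : {v : ℕ | v ∈ e}.Finite := by
  induction e using Sym2.ind with
  | _ x y =>
    apply ((Set.finite_singleton y).insert x).subset
    intro v hv
    rcases Sym2.mem_iff.1 hv with rfl | rfl <;> simp

lemma aux_eSupp_finite {E : Set (Sym2 ℕ)} (hE : E.Finite) : (eSupp E).Finite := by
  have h : eSupp E = ⋃ e ∈ E, {v | v ∈ e} := by
    ext v; simp [eSupp]
  rw [h]
  exact hE.biUnion fun e _ => aux_sym2_mem_finite e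

lemma aux_mem_eSupp {E : Set (Sym2 ℕ)} {e : Sym2 ℕ} {v : ℕ} (he : e ∈ E) (hv : v ∈ e) :
    v ∈ eSupp E := ⟨e, he, hv⟩

lemma aux_cliqueN_finite (n : ℕ) : (cliqueN n).Finite := by
  apply (((Set.finite_Iio n).prod (Set.finite_Iio n)).image (fun p : ℕ × ℕ => s(p.1, p.2))).subset
  intro e he
  induction e using Sym2.ind with
  | _ x y =>
    exact ⟨(x, y), ⟨he.2 x (Sym2.mem_mk_left x y), he.2 y (Sym2.mem_mk_right x y)⟩, rfl⟩

lemma aux_mem_clique {V : Set ℕ} {x y : ℕ} (hx : x ∈ V) (hy : y ∈ V) (hxy : x ≠ y) :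
    s(x, y) ∈ clique V := by
  refine ⟨by simp [Sym2.mk_isDiag_iff, hxy], ?_⟩
  intro v hv
  rcases Sym2.mem_iff.1 hv with rfl | rfl <;> assumption

lemma aux_cliqueN_mono {m n : ℕ} (h : m ≤ n) : cliqueN m ⊆ cliqueN n := by
  intro e he
  exact ⟨he.1, fun v hv => lt_of_lt_of_le (he.2 v hv) h⟩

lemma aux_mrk_bddAbove {M₀ : Matroid (Sym2 ℕ)} {X : Set (Sym2 ℕ)} (hX : X.Finite) :
    BddAbove {n : ℕ | ∃ I ⊆ X, M₀.Indep I ∧ I.ncard = n} := by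
  refine ⟨X.ncard, fun n hn => ?_⟩
  obtain ⟨I, hIX, _, rfl⟩ := hn
  exact Set.ncard_le_ncard hIX hX

lemma aux_le_mrk {M₀ : Matroid (Sym2 ℕ)} {X I : Set (Sym2 ℕ)} (hX : X.Finite)
    (hI : M₀.Indep I) (hIX : I ⊆ X) : I.ncard ≤ mrk M₀ X :=
  le_csSup (aux_mrk_bddAbove hX) ⟨I, hIX, hI, rfl⟩

lemma aux_mrk_le {M₀ : Matroid (Sym2 ℕ)} {X : Set (Sym2 ℕ)} {B : ℕ}
    (h : ∀ I, I ⊆ X → M₀.Indep I → I.ncard ≤ B) : mrk M₀ X ≤ B :=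
  csSup_le ⟨0, ∅, Set.empty_subset X, M₀.empty_indep, Set.ncard_empty _⟩
    (fun n hn => by obtain ⟨I, h1, h2, rfl⟩ := hn; exact h I h1 h2)

lemma aux_exists_perm_extend {S : Set ℕ} (hS : S.Finite) {f : ℕ → ℕ}
    (hf : Set.InjOn f S) : ∃ σ : Equiv.Perm ℕ, ∀ x ∈ S, σ x = f x := by
  classical
  have hSc : (Sᶜ : Set ℕ).Infinite := hS.infinite_compl
  have hTc : ((f '' S)ᶜ : Set ℕ).Infinite := (hS.image f).infinite_compl
  have i1 := hSc.to_subtype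
  have i2 := hTc.to_subtype
  obtain ⟨d1⟩ := nonempty_denumerable ↥(Sᶜ)
  obtain ⟨d2⟩ := nonempty_denumerable ↥((f '' S)ᶜ)
  let e2 : ↥(Sᶜ) ≃ ↥((f '' S)ᶜ) := (d1.eqv ↥(Sᶜ)).trans ((d2.eqv _)).symm
  let e1 : ↥S ≃ ↥(f '' S) := Equiv.Set.imageOfInjOn f S hf
  refine ⟨((Equiv.Set.sumCompl S).symm.trans
    ((e1.sumCongr e2).trans (Equiv.Set.sumCompl (f '' S)))), fun x hx => ?_⟩
  simp [Equiv.Set.sumCompl_symm_apply_of_mem hx, e1, Equiv.Set.imageOfInjOn]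

lemma aux_indep_card_le {M₀ : Matroid (Sym2 ℕ)} {I X : Set (Sym2 ℕ)} (hI : M₀.Indep I)
    (hX : X ⊆ M₀.E) (hXf : X.Finite) (hIX : I ⊆ M₀.closure X) : I.ncard ≤ X.ncard := by
  obtain ⟨J, hJ⟩ := M₀.exists_isBasis X hX
  obtain ⟨I', hI', hII'⟩ := hI.subset_isBasis_of_subset hIX (M₀.closure_subset_ground X)
  have h1 : I'.encard = J.encard := hI'.encard_eq_encard hJ.isBasis_closure_right
  have h2 : I.encard ≤ X.encard := by
    calc I.encard ≤ I'.encard := Set.encard_le_encard hII'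
    _ = J.encard := h1
    _ ≤ X.encard := Set.encard_le_encard hJ.subset
  rw [Set.ncard_def, Set.ncard_def]
  exact ENat.toNat_le_toNat h2 (by
    rw [Set.encard_ne_top_iff]; exact hXf)

lemma aux_indep_map_iff (M : GraphMatroidFamily) (σ : Equiv.Perm ℕ) (I : Set (Sym2 ℕ)) :
    M.M.Indep (Sym2.map σ '' I) ↔ M.M.Indep I := by
  constructor
  · intro h
    have h2 := M.invariant σ⁻¹ _ h
    have heq : Sym2.map ⇑σ⁻¹ '' (Sym2.map ⇑σ '' I) = I := by
      rw [Set.image_image]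
      have : ∀ e : Sym2 ℕ, Sym2.map ⇑σ⁻¹ (Sym2.map ⇑σ e) = e := by
        intro e
        rw [Sym2.map_map]
        have : (⇑σ⁻¹ ∘ ⇑σ) = id := by
          funext x; simp
        rw [this, Sym2.map_id, id_eq]
      simp only [this, Set.image_id']
    rwa [heq] at h2
  · exact M.invariant σ I

lemma aux_exists_min_dep (M₀ : Matroid (Sym2 ℕ)) {E : Set (Sym2 ℕ)} (hfin : E.Finite)
    (hdep : ¬ M₀.Indep E) :
    ∃ C ⊆ E, ¬ M₀.Indep C ∧ ∀ e ∈ C, M₀.Indep (C \ {e}) := by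
  classical
  set s : Set ℕ := {m | ∃ C ⊆ E, ¬ M₀.Indep C ∧ C.ncard = m} with hs
  have hne : s.Nonempty := ⟨E.ncard, E, subset_rfl, hdep, rfl⟩
  obtain ⟨C, hCE, hC, hcard⟩ : ∃ C ⊆ E, ¬M₀.Indep C ∧ C.ncard = sInf s := Nat.sInf_mem hne
  refine ⟨C, hCE, hC, fun e he => ?_⟩
  by_contra hdep'
  have hCfin : C.Finite := hfin.subset hCE
  have h1 : (C \ {e}).ncard = C.ncard - 1 := Set.ncard_diff_singleton_of_mem he
  have hpos : 0 < C.ncard := (Set.ncard_pos hCfin).2 ⟨e, he⟩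
  have hmem : (C \ {e}).ncard ∈ s := ⟨C \ {e}, Set.diff_subset.trans hCE, hdep', rfl⟩
  have := Nat.sInf_le hmem
  omega

lemma aux_isForest_subset {E C : Set (Sym2 ℕ)} (hE : IsForest E) (hCE : C ⊆ E) :
    IsForest C := by
  intro v p hp
  exact hE (p.mapLe (SimpleGraph.fromEdgeSet_mono hCE)) (hp.mapLe _)

lemma aux_exists_leaf {C : Set (Sym2 ℕ)} (hfin : C.Finite) (hnd : ∀ e ∈ C, ¬ e.IsDiag)
    (hforest : IsForest C) {e₀ : Sym2 ℕ} (he₀ : e₀ ∈ C) :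
    ∃ u v : ℕ, s(u, v) ∈ C ∧ u ≠ v ∧ ∀ e ∈ C, v ∈ e → e = s(u, v) := by
  classical
  set G := SimpleGraph.fromEdgeSet C with hG
  have hmem_ne : ∀ {a b : ℕ}, s(a, b) ∈ C → a ≠ b := by
    intro a b h hab
    exact hnd _ h (by rw [Sym2.mk_isDiag_iff]; exact hab)
  have hadj : ∀ {a b : ℕ}, s(a, b) ∈ C → G.Adj a b := by
    intro a b h
    exact (SimpleGraph.fromEdgeSet_adj _).2 ⟨h, hmem_ne h⟩
  have hadj_mem : ∀ {a b : ℕ}, G.Adj a b → s(a, b) ∈ C :=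
    fun h => ((SimpleGraph.fromEdgeSet_adj _).1 h).1
  -- support of walks lies in eSupp C (except possibly the start)
  have hsupp : ∀ (a b : ℕ) (p : G.Walk a b) (w : ℕ), w ∈ p.support → w = a ∨ w ∈ eSupp C := by
    intro a b p
    induction p with
    | nil => intro w hw; left; simpa using hw
    | @cons a c b h q ih =>
      intro w hw
      rw [SimpleGraph.Walk.support_cons] at hw
      rcases List.mem_cons.1 hw with rfl | hw
      · exact Or.inl rfl
      · rcases ih w hw with rfl | hw'
        · exact Or.inr ⟨s(a, w), hadj_mem h, Sym2.mem_mk_right a w⟩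
        · exact Or.inr hw'
  have hSfin : (eSupp C).Finite := aux_eSupp_finite hfin
  -- lengths of paths are bounded
  set L : Set ℕ := {l | ∃ (a b : ℕ) (p : G.Walk a b), p.IsPath ∧ p.length = l} with hL
  have hbdd : BddAbove L := by
    refine ⟨(eSupp C).ncard + 1, fun l hl => ?_⟩
    obtain ⟨a, b, p, hp, rfl⟩ := hl
    have hsub : ↑p.support.toFinset ⊆ insert a (eSupp C) := by
      intro w hw
      simp only [List.coe_toFinset, Set.mem_setOf_eq] at hw
      rcases hsupp a b p w hw with rfl | hw2
      · simp
      · simp [hw2]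
    have hcard : p.support.toFinset.card ≤ (insert a (eSupp C)).ncard :=
      le_trans (le_of_eq (Set.ncard_coe_finset _).symm)
        (Set.ncard_le_ncard hsub (hSfin.insert a))
    rw [List.toFinset_card_of_nodup hp.support_nodup] at hcard
    have hlen := p.length_support
    have := Set.ncard_insert_le a (eSupp C)
    omega
  -- there is a path of length 1
  obtain ⟨x₀, y₀, rfl⟩ : ∃ x y, e₀ = s(x, y) := by
    induction e₀ using Sym2.ind with
    | _ x y => exact ⟨x, y, rfl⟩
  have hxy₀ : x₀ ≠ y₀ := hmem_ne he₀
  have h1L : 1 ∈ L := by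
    refine ⟨x₀, y₀, SimpleGraph.Walk.cons (hadj he₀) SimpleGraph.Walk.nil, ?_, rfl⟩
    rw [SimpleGraph.Walk.cons_isPath_iff]
    exact ⟨SimpleGraph.Walk.IsPath.nil, by simp [hxy₀]⟩
  -- take a path of maximal length
  obtain ⟨a, b, p, hp, hlen⟩ : sSup L ∈ L := Nat.sSup_mem ⟨1, h1L⟩ hbdd
  have h1le : 1 ≤ p.length := by
    rw [hlen]; exact le_csSup hbdd h1L
  cases p with
  | nil => simp at h1le
  | @cons a x₁ b h q =>
    -- candidate leaf : a, with unique neighbor x₁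
    refine ⟨x₁, a, ?_, (SimpleGraph.Adj.ne h).symm, ?_⟩
    · rw [Sym2.eq_swap]; exact hadj_mem h
    · intro e he hv
      obtain ⟨y, rfl⟩ : ∃ y, e = s(a, y) := by
        induction e using Sym2.ind with
        | _ z w =>
          rcases Sym2.mem_iff.1 hv with rfl | rfl
          · exact ⟨w, rfl⟩
          · exact ⟨z, Sym2.eq_swap⟩
      have hya : y ≠ a := fun hh => hmem_ne he (hh ▸ rfl)
      by_contra hne'
      have hyx : y ≠ x₁ := fun hh => hne' (by rw [hh, Sym2.eq_swap])
      have hadj_ay : G.Adj a y := hadj he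
      rw [SimpleGraph.Walk.cons_isPath_iff] at hp
      by_cases hy : y ∈ (SimpleGraph.Walk.cons h q).support
      · -- closes a cycle : contradiction with the forest property
        have hniq : s(a, y) ∉ (SimpleGraph.Walk.cons h q).edges := by
          rw [SimpleGraph.Walk.edges_cons]
          intro hmem
          rcases List.mem_cons.1 hmem with heq | hmem'
          · rw [Sym2.eq_iff] at heq
            rcases heq with ⟨-, h2⟩ | ⟨h1, -⟩
            · exact hyx h2
            · exact (SimpleGraph.Adj.ne h) h1
          · exact hp.2 (SimpleGraph.Walk.fst_mem_support_of_mem_edges q hmem')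
        set q' := (SimpleGraph.Walk.cons h q).takeUntil y hy with hq'
        have hq'path : q'.IsPath :=
          (SimpleGraph.Walk.cons_isPath_iff h q).2 hp |>.takeUntil hy
        have hq'edges : s(a, y) ∉ q'.edges :=
          fun hh => hniq (SimpleGraph.Walk.edges_takeUntil_subset _ hy hh)
        have hcyc : (SimpleGraph.Walk.cons hadj_ay q'.reverse).IsCycle := by
          rw [SimpleGraph.Walk.cons_isCycle_iff]
          refine ⟨hq'path.reverse, ?_⟩
          rw [SimpleGraph.Walk.edges_reverse, List.mem_reverse]
          exact hq'edges
        exact hforest _ hcyc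
      · -- extend the path : contradiction with maximality
        have hplong : ((SimpleGraph.Walk.cons h q).cons hadj_ay.symm).IsPath := by
          rw [SimpleGraph.Walk.cons_isPath_iff]
          exact ⟨(SimpleGraph.Walk.cons_isPath_iff h q).2 hp, hy⟩
        have : ((SimpleGraph.Walk.cons h q).cons hadj_ay.symm).length ∈ L :=
          ⟨y, b, _, hplong, rfl⟩
        have hle := le_csSup hbdd this
        rw [SimpleGraph.Walk.length_cons] at hle
        omega

lemma aux_key_closure (M : GraphMatroidFamily) {C : Set (Sym2 ℕ)} {u v : ℕ}
    (hCfin : C.Finite) (hCnd : ∀ e ∈ C, ¬ e.IsDiag) (hCdep : ¬ M.M.Indep C)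
    (huv : s(u, v) ∈ C) (hne : u ≠ v) (hleaf : ∀ e ∈ C, v ∈ e → e = s(u, v))
    (hind : M.M.Indep (C \ {s(u, v)}))
    {n a : ℕ} (hn : (eSupp C).ncard + 2 ≤ n) (ha : a < n - 1) :
    s(a, n - 1) ∈ M.M.closure (cliqueN (n - 1)) := by
  classical
  set D := C \ {s(u, v)} with hD
  have hSfin : (eSupp C).Finite := aux_eSupp_finite hCfin
  set Tf : Finset ℕ := (hSfin.toFinset.erase u).erase v with hTf
  have hScard : hSfin.toFinset.card = (eSupp C).ncard :=
    (Set.ncard_eq_toFinset_card _ hSfin).symm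
  have hTcard : Tf.card ≤ n - 2 := by
    have h1 : Tf.card ≤ hSfin.toFinset.card :=
      le_trans (Finset.card_erase_le) (Finset.card_erase_le)
    omega
  set eT := (Tf.orderIsoOfFin rfl).symm with heT
  set gi : ℕ → ℕ := fun i => if i < a then i else i + 1 with hgi
  set ψ : ℕ → ℕ := fun w =>
    if w = v then n - 1
    else if w = u then a
    else if hw : w ∈ Tf then gi (eT ⟨w, hw⟩ : Fin Tf.card) else w with hψ
  have hψv : ψ v = n - 1 := by simp [hψ]
  have hψu : ψ u = a := by simp [hψ, hne]
  have hmemT : ∀ w, w ∈ eSupp C → w ≠ v → w ≠ u → w ∈ Tf := by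
    intro w hw hwv hwu
    simp [hTf, Finset.mem_erase, hwv, hwu, hSfin.mem_toFinset, hw]
  have hgi_lt : ∀ i : Fin Tf.card, gi i < n - 1 ∧ gi i ≠ a := by
    intro i
    have hi : (i : ℕ) < Tf.card := i.isLt
    simp only [hgi]
    split <;> omega
  have hψT : ∀ w, w ≠ v → w ≠ u → (hw : w ∈ Tf) →
      ψ w = gi (eT ⟨w, hw⟩ : Fin Tf.card) := by
    intro w hwv hwu hw
    simp [hψ, hwv, hwu, hw]
  have hψlt : ∀ w, w ∈ eSupp C → w ≠ v → ψ w < n - 1 := by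
    intro w hw hwv
    by_cases hwu : w = u
    · rw [hwu, hψu]; exact ha
    · rw [hψT w hwv hwu (hmemT w hw hwv hwu)]
      exact (hgi_lt _).1
  have hψinj : Set.InjOn ψ (eSupp C) := by
    intro w1 hw1 w2 hw2 heq
    by_cases h1v : w1 = v <;> by_cases h2v : w2 = v
    · rw [h1v, h2v]
    · exfalso; rw [h1v, hψv] at heq
      exact absurd (heq ▸ hψlt w2 hw2 h2v) (by omega)
    · exfalso; rw [h2v, hψv] at heq
      exact absurd (heq ▸ hψlt w1 hw1 h1v) (by omega)
    · by_cases h1u : w1 = u <;> by_cases h2u : w2 = u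
      · rw [h1u, h2u]
      · exfalso
        rw [h1u, hψu, hψT w2 h2v h2u (hmemT w2 hw2 h2v h2u)] at heq
        exact (hgi_lt _).2 heq.symm
      · exfalso
        rw [h2u, hψu, hψT w1 h1v h1u (hmemT w1 hw1 h1v h1u)] at heq
        exact (hgi_lt _).2 heq
      · have hm1 := hmemT w1 hw1 h1v h1u
        have hm2 := hmemT w2 hw2 h2v h2u
        rw [hψT w1 h1v h1u hm1, hψT w2 h2v h2u hm2] at heq
        have hgi_inj : (eT ⟨w1, hm1⟩ : Fin Tf.card) = (eT ⟨w2, hm2⟩ : Fin Tf.card) := by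
          have hval := heq
          simp only [hgi] at hval
          apply Fin.ext
          split at hval <;> split at hval <;> omega
        have := eT.injective hgi_inj
        exact Subtype.ext_iff.1 this
  obtain ⟨σ, hσ⟩ := aux_exists_perm_extend hSfin hψinj
  have hu_mem : u ∈ eSupp C := ⟨s(u, v), huv, Sym2.mem_mk_left u v⟩
  have hv_mem : v ∈ eSupp C := ⟨s(u, v), huv, Sym2.mem_mk_right u v⟩
  have hσu : σ u = a := by rw [hσ u hu_mem, hψu]
  have hσv : σ v = n - 1 := by rw [hσ v hv_mem, hψv]
  have hDmem : ∀ e ∈ D, ∀ w, w ∈ e → w ∈ eSupp C ∧ w ≠ v := by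
    intro e he w hw
    refine ⟨⟨e, he.1, hw⟩, fun hwv => ?_⟩
    exact he.2 (by rw [← hleaf e he.1 (hwv ▸ hw)]; exact rfl)
  have hD'sub : Sym2.map σ '' D ⊆ cliqueN (n - 1) := by
    rintro e' ⟨e, he, rfl⟩
    obtain ⟨x, y, rfl⟩ : ∃ x y, e = s(x, y) := by
      induction e using Sym2.ind with
      | _ x y => exact ⟨x, y, rfl⟩
    rw [Sym2.map_pair_eq]
    have hx := hDmem _ he x (Sym2.mem_mk_left x y)
    have hy := hDmem _ he y (Sym2.mem_mk_right x y)
    have hxy : x ≠ y := by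
      intro hh
      exact hCnd _ he.1 (by rw [Sym2.mk_isDiag_iff]; exact hh)
    refine aux_mem_clique ?_ ?_ (fun hh => hxy (σ.injective hh))
    · show σ x < n - 1
      rw [hσ x hx.1]; exact hψlt x hx.1 hx.2
    · show σ y < n - 1
      rw [hσ y hy.1]; exact hψlt y hy.1 hy.2
  have hC_eq : C = insert s(u, v) D := by
    rw [hD, Set.insert_diff_singleton, Set.insert_eq_self.2 huv]
  have himage : Sym2.map σ '' C = insert s(a, n - 1) (Sym2.map σ '' D) := by
    rw [hC_eq, Set.image_insert_eq, Sym2.map_pair_eq, hσu, hσv]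
  have hnotmem : s(a, n - 1) ∉ Sym2.map σ '' D := by
    rintro ⟨e, he, heq⟩
    have : e = s(u, v) := by
      apply Sym2.map.injective σ.injective
      rw [heq, ← hσu, ← hσv, Sym2.map_pair_eq]
    exact he.2 this
  have hD'ind : M.M.Indep (Sym2.map σ '' D) := M.invariant σ D hind
  have hC'dep : ¬ M.M.Indep (Sym2.map σ '' C) :=
    fun h => hCdep ((aux_indep_map_iff M σ C).1 h)
  have hC'sub : insert s(a, n - 1) (Sym2.map σ '' D) ⊆ M.M.E := by
    rw [M.ground_eq]
    rintro e (rfl | ⟨f, hf, rfl⟩)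
    · simp only [Set.mem_setOf_eq, Sym2.mk_isDiag_iff]
      omega
    · simp only [Set.mem_setOf_eq]
      rw [Sym2.isDiag_map σ.injective]
      exact hCnd f hf.1
  have hmem_cl : s(a, n - 1) ∈ M.M.closure (Sym2.map σ '' D) := by
    rw [hD'ind.mem_closure_iff]
    left
    rw [Matroid.dep_iff]
    exact ⟨by rw [← himage]; exact hC'dep, hC'sub⟩
  exact M.M.closure_subset_closure hD'sub hmem_cl

lemma aux_clique_subset_closure (M : GraphMatroidFamily) {C : Set (Sym2 ℕ)} {u v : ℕ}
    (hCfin : C.Finite) (hCnd : ∀ e ∈ C, ¬ e.IsDiag) (hCdep : ¬ M.M.Indep C)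
    (huv : s(u, v) ∈ C) (hne : u ≠ v) (hleaf : ∀ e ∈ C, v ∈ e → e = s(u, v))
    (hind : M.M.Indep (C \ {s(u, v)})) :
    ∀ m : ℕ, cliqueN m ⊆ M.M.closure (cliqueN ((eSupp C).ncard + 2)) := by
  set N₀ := (eSupp C).ncard + 2 with hN₀
  have hground : ∀ k, cliqueN k ⊆ M.M.E := by
    intro k e he; rw [M.ground_eq]; exact he.1
  intro m
  induction m with
  | zero => exact (aux_cliqueN_mono (Nat.zero_le _)).trans (M.M.subset_closure _ (hground N₀))
  | succ m ih =>
    by_cases hm : m + 1 ≤ N₀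
    · exact (aux_cliqueN_mono hm).trans (M.M.subset_closure _ (hground N₀))
    · have hcl_m : M.M.closure (cliqueN m) ⊆ M.M.closure (cliqueN N₀) := by
        have h1 := M.M.closure_subset_closure ih
        rwa [M.M.closure_closure] at h1
      intro e he
      obtain ⟨x, y, rfl⟩ : ∃ x y, e = s(x, y) := by
        induction e using Sym2.ind with
        | _ x y => exact ⟨x, y, rfl⟩
      have hxy : x ≠ y := fun hh => he.1 (by rw [Sym2.mk_isDiag_iff]; exact hh)
      have hx : x < m + 1 := he.2 x (Sym2.mem_mk_left x y)
      have hy : y < m + 1 := he.2 y (Sym2.mem_mk_right x y)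
      have hkey : ∀ z : ℕ, z < m → s(z, m) ∈ M.M.closure (cliqueN N₀) := by
        intro z hz
        have h2 : (eSupp C).ncard + 2 ≤ m + 1 := by omega
        have h3 : z < (m + 1) - 1 := by omega
        have h4 := aux_key_closure M hCfin hCnd hCdep huv hne hleaf hind h2 h3
        simp only [Nat.add_sub_cancel] at h4
        exact hcl_m h4
      rcases lt_or_ge x m with hxm | hxm
      · rcases lt_or_ge y m with hym | hym
        · exact hcl_m (M.M.subset_closure _ (hground m)
            ⟨he.1, fun w hw => by
              rcases Sym2.mem_iff.1 hw with rfl | rfl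
              · exact hxm
              · exact hym⟩)
        · have hym' : y = m := by omega
          rw [hym']
          exact hkey x hxm
      · have hxm' : x = m := by omega
        have hym : y < m := by omega
        rw [hxm', Sym2.eq_swap]
        exact hkey y hym

/-- A graph matroid family is unbounded if and only if every forest
is `M`-independent. -/
theorem unbounded_iff_forests_indep (M : GraphMatroidFamily) :
    M.Unbounded ↔ ∀ E : Set (Sym2 ℕ), IsGraph E → IsForest E → M.Indep E := by
  constructor
  · intro hU E hG hF
    by_contra hdep
    obtain ⟨C, hCE, hCdep, hmin⟩ := aux_exists_min_dep M.M hG.1 hdep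
    have hCfin : C.Finite := hG.1.subset hCE
    have hCnd : ∀ e ∈ C, ¬ e.IsDiag := fun e he => hG.2 e (hCE he)
    have hCforest : IsForest C := aux_isForest_subset hF hCE
    obtain ⟨e₀, he₀⟩ : C.Nonempty := by
      rcases Set.eq_empty_or_nonempty C with rfl | h
      · exact absurd M.M.empty_indep hCdep
      · exact h
    obtain ⟨u, v, huv, hne, hleaf⟩ := aux_exists_leaf hCfin hCnd hCforest he₀
    have hind := hmin _ huv
    have hcl := aux_clique_subset_closure M hCfin hCnd hCdep huv hne hleaf hind
    set N₀ := (eSupp C).ncard + 2 with hN₀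
    set B := (cliqueN N₀).ncard with hB
    obtain ⟨n, hn⟩ := hU B
    have hle : M.rk (cliqueN n) ≤ B := by
      show mrk M.M (cliqueN n) ≤ B
      apply aux_mrk_le
      intro I hIX hI
      exact aux_indep_card_le hI (fun e he => M.ground_eq ▸ he.1) (aux_cliqueN_finite N₀)
        (hIX.trans (hcl n))
    exact absurd hn (not_lt.2 hle)
  · intro h B
    refine ⟨2 * (B + 1), ?_⟩
    set m := B + 1 with hm
    set P : Set (Sym2 ℕ) := (fun i => s(2 * i, 2 * i + 1)) '' ↑(Finset.range m) with hP
    have hinj : Set.InjOn (fun i => s(2 * i, 2 * i + 1)) ↑(Finset.range m) := by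
      intro i _ j _ hij
      simp only [Sym2.eq_iff] at hij
      rcases hij with ⟨h1, -⟩ | ⟨h1, h2⟩ <;> omega
    have hPfin : P.Finite := ((Finset.range m).finite_toSet).image _
    have hPgraph : IsGraph P := by
      refine ⟨hPfin, ?_⟩
      rintro e ⟨i, -, rfl⟩
      rw [Sym2.mk_isDiag_iff]
      omega
    have huniq : ∀ a b c : ℕ, (SimpleGraph.fromEdgeSet P).Adj a b →
        (SimpleGraph.fromEdgeSet P).Adj a c → b = c := by
      intro a b c h1 h2
      obtain ⟨i, -, hi⟩ := ((SimpleGraph.fromEdgeSet_adj _).1 h1).1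
      obtain ⟨j, -, hj⟩ := ((SimpleGraph.fromEdgeSet_adj _).1 h2).1
      rw [Sym2.eq_iff] at hi hj
      rcases hi with ⟨hi1, hi2⟩ | ⟨hi1, hi2⟩ <;> rcases hj with ⟨hj1, hj2⟩ | ⟨hj1, hj2⟩ <;> omega
    have hPforest : IsForest P := by
      intro w p hp
      cases p with
      | nil => have := hp.three_le_length; simp at this
      | cons h q =>
        rename_i x
        cases q with
        | nil => exact h.ne rfl
        | cons h2 r =>
          rename_i y
          have hyw : y = w := huniq x y w h2 h.symm
          rw [← hyw] at h
          cases r with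
          | nil =>
            have := hp.three_le_length
            simp [SimpleGraph.Walk.length_cons] at this
          | cons h3 r' =>
            rename_i z
            have hzx : z = x := huniq y z x h3 h
            have hxs : x ∈ r'.support := hzx ▸ r'.start_mem_support
            have hnodup := hp.support_nodup
            simp only [SimpleGraph.Walk.support_cons, List.tail_cons] at hnodup
            rw [List.nodup_cons] at hnodup
            exact hnodup.1 (List.mem_cons.2 (Or.inr hxs))
    have hPindep : M.M.Indep P := h P hPgraph hPforest
    have hsub : P ⊆ cliqueN (2 * m) := by
      rintro e ⟨i, hi, rfl⟩
      simp only [Finset.coe_range, Set.mem_Iio] at hi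
      exact aux_mem_clique (by show 2 * i < 2 * m; omega) (by show 2 * i + 1 < 2 * m; omega)
        (by omega)
    have hcard : P.ncard = m := by
      rw [hP, Set.ncard_image_of_injOn hinj, Set.ncard_coe_finset, Finset.card_range]
    have hle := aux_le_mrk (aux_cliqueN_finite (2 * m)) hPindep hsub
    show B < mrk M.M (cliqueN (2 * m))
    omega
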